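/- Let {aₙ} ⊂ ℍ with limsup |aₙ|^{1/n} = 1/R for some R > 0. Fix q0 = x0 + I·y0 with x0 ∈ ℝ, y0 > 0, I ∈ 𝕊, and define P_{2n}(q) = [(q−x0)² + y0²]ⁿ and P_{2n+1}(q) = [(q−x0)² + y0²]ⁿ·(q − q0). Then for every q ∈ ℍ with |(q−x0)² + y0²| > R², the series Σₙ Pₙ(q)·aₙ diverges (the general term does not tend to 0). -/

import Mathlib

open Quaternion Filter Topology

/-- The polynomials `P_{2n}(q) = [(q-x0)²+y0²]ⁿ` and `P_{2n+1}(q) = [(q-x0)²+y0²]ⁿ(q-q0)`. -/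
noncomputable def sphericalPoly (x0 y0 : ℝ) (q0 : ℍ[ℝ]) (n : ℕ) (q : ℍ[ℝ]) : ℍ[ℝ] :=
  ((q - (x0 : ℍ[ℝ])) ^ 2 + ((y0 ^ 2 : ℝ) : ℍ[ℝ])) ^ (n / 2) *
    (if n % 2 = 1 then q - q0 else 1)

theorem sphericalSeries_diverges (a : ℕ → ℍ[ℝ]) (R : ℝ) (hR : 0 < R)
    (ha : limsup (fun n : ℕ => ‖a n‖ ^ (1 / (n : ℝ))) atTop = 1 / R)
    (x0 y0 : ℝ) (hy0 : 0 < y0) (I : ℍ[ℝ]) (hI : I ^ 2 = -1)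
    (q0 : ℍ[ℝ]) (hq0 : q0 = (x0 : ℍ[ℝ]) + y0 • I)
    (q : ℍ[ℝ]) (hq : R ^ 2 < ‖(q - (x0 : ℍ[ℝ])) ^ 2 + ((y0 ^ 2 : ℝ) : ℍ[ℝ])‖) :
    ¬ Tendsto (fun n : ℕ => sphericalPoly x0 y0 q0 n q * a n) atTop (𝓝 0) := by
  intro h
  set S : ℍ[ℝ] := (q - (x0 : ℍ[ℝ])) ^ 2 + ((y0 ^ 2 : ℝ) : ℍ[ℝ]) with hS
  set L : ℝ := ‖S‖ with hLdef
  have hL : R ^ 2 < L := hq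
  have hLpos : 0 < L := lt_trans (by positivity) hL
  -- q ≠ q0
  have hqq0 : q ≠ q0 := by
    intro he
    have hz : S = 0 := by
      rw [hS, he, hq0, add_sub_cancel_left, smul_pow, hI]
      ext <;> simp [← Quaternion.coe_pow]
    rw [hz] at hLdef
    simp at hLdef
    rw [hLdef] at hL
    nlinarith
  have hm0 : 0 < ‖q - q0‖ := by
    simpa [sub_eq_zero] using hqq0
  set m : ℝ := min 1 ‖q - q0‖ with hm
  have hmpos : 0 < m := lt_min one_pos hm0
  -- norm of the general term
  have hnorm : ∀ n : ℕ, m * L ^ (n / 2) * ‖a n‖ ≤ ‖sphericalPoly x0 y0 q0 n q * a n‖ := by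
    intro n
    rw [sphericalPoly, norm_mul, norm_mul, norm_pow]
    have : m ≤ ‖(if n % 2 = 1 then q - q0 else 1 : ℍ[ℝ])‖ := by
      split
      · exact min_le_right _ _
      · simp only [norm_one]; exact min_le_left _ _
    calc m * L ^ (n / 2) * ‖a n‖
        ≤ ‖(if n % 2 = 1 then q - q0 else 1 : ℍ[ℝ])‖ * L ^ (n / 2) * ‖a n‖ := by
          apply mul_le_mul_of_nonneg_right (mul_le_mul_of_nonneg_right this (by positivity))
            (norm_nonneg _)
      _ = ‖S‖ ^ (n / 2) * ‖(if n % 2 = 1 then q - q0 else 1 : ℍ[ℝ])‖ * ‖a n‖ := by ring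
  -- eventual bound on ‖a n‖
  have hev : ∀ᶠ n : ℕ in atTop, ‖a n‖ ≤ 1 / (m * L ^ (n / 2)) := by
    have hn0 : Tendsto (fun n : ℕ => ‖sphericalPoly x0 y0 q0 n q * a n‖) atTop (𝓝 0) := by
      simpa using h.norm
    filter_upwards [hn0.eventually_lt_const one_pos] with n hn
    have h1 : m * L ^ (n / 2) * ‖a n‖ < 1 := lt_of_le_of_lt (hnorm n) hn
    have h2 : 0 < m * L ^ (n / 2) := by positivity
    rw [le_div_iff₀ h2]
    nlinarith [norm_nonneg (a n)]
  -- the comparison sequence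
  set g : ℕ → ℝ := fun n => (1 / m) ^ (1 / (n : ℝ)) * L ^ (-((n / 2 : ℕ) / (n : ℝ))) with hg
  have hfg : ∀ᶠ n : ℕ in atTop, ‖a n‖ ^ (1 / (n : ℝ)) ≤ g n := by
    filter_upwards [hev, eventually_ge_atTop 1] with n hn hn1
    have hb : (0:ℝ) < 1 / (m * L ^ (n / 2)) := by positivity
    have := Real.rpow_le_rpow (norm_nonneg (a n)) hn (by positivity : (0:ℝ) ≤ 1 / (n:ℝ))
    refine this.trans_eq ?_
    rw [hg]
    have : (1 : ℝ) / (m * L ^ (n / 2)) = (1 / m) * (L ^ (n / 2))⁻¹ := by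
      field_simp
    rw [this, Real.mul_rpow (by positivity) (by positivity),
      Real.inv_rpow (by positivity), ← Real.rpow_natCast L (n / 2),
      ← Real.rpow_mul hLpos.le, ← Real.rpow_neg hLpos.le]
    ring_nf
  -- limit of g
  have hexp : Tendsto (fun n : ℕ => ((n / 2 : ℕ) : ℝ) / (n : ℝ)) atTop (𝓝 (1 / 2)) := by
    have hlow : Tendsto (fun n : ℕ => ((n : ℝ) - 1) / (2 * (n : ℝ))) atTop (𝓝 (1 / 2)) := by
      have : ∀ᶠ n : ℕ in atTop, ((n : ℝ) - 1) / (2 * (n : ℝ)) = 1 / 2 - (1 / 2) * (1 / n) := by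
        filter_upwards [eventually_ge_atTop 1] with n hn
        have : (n : ℝ) ≠ 0 := by positivity
        field_simp
      rw [tendsto_congr' this]
      have := tendsto_one_div_atTop_nhds_zero_nat (𝕜 := ℝ)
      have h2 := (tendsto_const_nhds (x := (1/2 : ℝ)) (f := atTop)).sub
        ((tendsto_const_nhds (x := (1/2 : ℝ)) (f := atTop)).mul this)
      simpa using h2
    apply tendsto_of_tendsto_of_tendsto_of_le_of_le' hlow tendsto_const_nhds
    · filter_upwards [eventually_ge_atTop 1] with n hn
      have h1 : n ≤ 2 * (n / 2) + 1 := by omega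
      have h1' : (n : ℝ) ≤ 2 * ((n / 2 : ℕ) : ℝ) + 1 := by exact_mod_cast h1
      have hn' : (0:ℝ) < (n:ℝ) := by exact_mod_cast hn
      rw [div_le_div_iff₀ (by positivity) hn']
      nlinarith
    · filter_upwards [eventually_ge_atTop 1] with n hn
      have h1 : 2 * (n / 2) ≤ n := by omega
      have h1' : 2 * ((n / 2 : ℕ) : ℝ) ≤ (n : ℝ) := by exact_mod_cast h1
      have hn' : (0:ℝ) < (n:ℝ) := by exact_mod_cast hn
      rw [div_le_div_iff₀ hn' (by norm_num)]
      nlinarith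
  have hgt : Tendsto g atTop (𝓝 (L ^ (-(1/2) : ℝ))) := by
    have h1 : Tendsto (fun n : ℕ => (1 / m : ℝ) ^ (1 / (n : ℝ))) atTop (𝓝 1) := by
      have hc : ContinuousAt ((1 / m : ℝ) ^ · : ℝ → ℝ) 0 :=
        Real.continuousAt_const_rpow (by positivity)
      have := hc.tendsto.comp tendsto_one_div_atTop_nhds_zero_nat
      simpa [Function.comp_def] using this
    have h2 : Tendsto (fun n : ℕ => L ^ (-((n / 2 : ℕ) / (n : ℝ)))) atTop
        (𝓝 (L ^ (-(1/2) : ℝ))) := by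
      have hc : ContinuousAt (L ^ · : ℝ → ℝ) (-(1/2)) :=
        Real.continuousAt_const_rpow (by positivity)
      exact hc.tendsto.comp hexp.neg
    rw [hg]
    have := h1.mul h2
    simpa [one_div] using this
  -- limsup bound
  have hlimsup : limsup (fun n : ℕ => ‖a n‖ ^ (1 / (n : ℝ))) atTop ≤ L ^ (-(1/2) : ℝ) := by
    have := limsup_le_limsup hfg
      (isCoboundedUnder_le_of_le atTop (fun n => Real.rpow_nonneg (norm_nonneg _) _))
      hgt.isBoundedUnder_le
    rwa [hgt.limsup_eq] at this
  rw [ha] at hlimsup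
  -- contradiction
  have hsqrt : R < Real.sqrt L := (Real.lt_sqrt hR.le).mpr hL
  have hL2 : L ^ (-(1/2) : ℝ) = (Real.sqrt L)⁻¹ := by
    rw [Real.sqrt_eq_rpow, ← Real.rpow_neg hLpos.le]
  rw [hL2] at hlimsup
  have : (Real.sqrt L)⁻¹ < 1 / R := by
    rw [one_div]
    exact inv_strictAnti₀ hR hsqrt
  linarith
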